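/- Let H be a real constant and let w₀, w₁, w₂ be real numbers satisfying w₂·(4w₀w₁ - (1 + H²)) = 4w₁³ + (1 + H²)(2w₁ + w₀), with 4w₀w₁ - (1 + H²) ≠ 0 and 4w₁w₂ - (1 + H²) ≠ 0. Define L(a,b) = (2(a² + b²) + 1 + H²)/(4ab - (1 + H²)). Then: (i) L(w₁, w₂) = L(w₀, w₁), i.e. L is a conserved quantity of the second-order recurrence wₙ₊₂ = (4wₙ₊₁³ + (1 + H²)(2wₙ₊₁ + wₙ))/(4wₙwₙ₊₁ - (1 + H²)); (ii) the linear relation w₂ - 2L(w₀, w₁)·w₁ + w₀ = 0 holds, so the recurrence is linearizable. -/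

import Mathlib

/-- The second-order recurrence `wₙ₊₂ = (4wₙ₊₁³ + (1+H²)(2wₙ₊₁+wₙ))/(4wₙwₙ₊₁-(1+H²))`
arising from `dE₃` has the conserved quantity
`L(a,b) = (2(a²+b²)+1+H²)/(4ab-(1+H²))`, and satisfies the linear relation
`w₂ - 2L(w₀,w₁)w₁ + w₀ = 0`, so it is linearizable. -/
theorem dE3_recurrence_conserved_and_linearizable (H w0 w1 w2 : ℝ)
    (hrec : w2*(4*w0*w1 - (1 + H^2)) = 4*w1^3 + (1 + H^2)*(2*w1 + w0))
    (h0 : 4*w0*w1 - (1 + H^2) ≠ 0)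
    (h1 : 4*w1*w2 - (1 + H^2) ≠ 0) :
    (2*(w1^2 + w2^2) + 1 + H^2)/(4*w1*w2 - (1 + H^2)) =
      (2*(w0^2 + w1^2) + 1 + H^2)/(4*w0*w1 - (1 + H^2)) ∧
    w2 - 2*((2*(w0^2 + w1^2) + 1 + H^2)/(4*w0*w1 - (1 + H^2)))*w1 + w0 = 0 := by
  constructor
  · rw [div_eq_div_iff h1 h0]
    linear_combination (2*w2 - 2*w0) * hrec
  · apply mul_right_cancel₀ h0
    linear_combination hrec - 2*w1*(div_mul_cancel₀ (2*(w0^2 + w1^2) + 1 + H^2) h0)
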